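/- arXiv:1901.03917 — 3 statements merged into one kernel-verified Lean document; each statement's English description precedes it below -/
import Mathlib

section
/- For every n ≥ 4, each vertex of the Bubble-sort graph BS_n lies on exactly (n−2)(n−3)/2 distinct 4-cycles (cycles counted as subgraphs, i.e. up to choice of starting vertex and direction). -/
/-- The adjacent transposition `b_i` (1-indexed, swapping positions `i` and `i+1`,
i.e. the 0-indexed positions `i-1` and `i` of `Fin n`), extended by `1` outside
the valid range `1 ≤ i ≤ n-1`. -/
def bsGen (n i : ℕ) : Equiv.Perm (Fin n) :=
  if h : 0 < i ∧ i < n then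
    Equiv.swap ⟨i - 1, lt_of_le_of_lt (Nat.pred_le i) h.2⟩ ⟨i, h.2⟩
  else 1

theorem bsGen_ne_one (n i : ℕ) (h1 : 0 < i) (h2 : i < n) : bsGen n i ≠ 1 := by
  rw [bsGen, dif_pos ⟨h1, h2⟩]
  intro h
  have h' := congrArg Fin.val (Equiv.swap_eq_one_iff.mp h)
  simp at h'
  omega

theorem bsGen_mul_self (n i : ℕ) : bsGen n i * bsGen n i = 1 := by
  rw [bsGen]; split
  · exact Equiv.swap_mul_self _ _
  · simp

/-- The Bubble-sort graph `BS_n` on the symmetric group `Sym_n = Equiv.Perm (Fin n)`: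
`π` and `τ` are adjacent iff `τ = π * b_i` for some `1 ≤ i ≤ n-1`. -/
def BS (n : ℕ) : SimpleGraph (Equiv.Perm (Fin n)) where
  Adj π τ := ∃ i, 0 < i ∧ i < n ∧ τ = π * bsGen n i
  symm := by
    refine ⟨?_⟩
    rintro π τ ⟨i, h1, h2, rfl⟩
    exact ⟨i, h1, h2, by rw [mul_assoc, bsGen_mul_self, mul_one]⟩
  loopless := by
    refine ⟨?_⟩
    rintro π ⟨i, h1, h2, h⟩
    exact bsGen_ne_one n i h1 h2 (mul_left_cancel (h.symm.trans (mul_one π).symm))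

/-- `H` is an `ℓ`-cycle subgraph of `BS n`: the subgraph traced by some cycle walk
with `ℓ` vertices (equivalently, of length `ℓ`).  Since a cycle subgraph determines
the traversal up to starting vertex and direction, counting such subgraphs counts
cycles once regardless of starting vertex and direction. -/
def IsCycleSub {n : ℕ} (H : (BS n).Subgraph) (ℓ : ℕ) : Prop :=
  ∃ (u : Equiv.Perm (Fin n)) (w : (BS n).Walk u u),
    w.IsCycle ∧ w.length = ℓ ∧ H = w.toSubgraph

/-! ### Auxiliary lemmas -/

/-- ℕ-level model of the action of `bsGen n i` on values. -/
def g (i x : ℕ) : ℕ := if x = i - 1 then i else if x = i then i - 1 else x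

theorem gspec (i x : ℕ) : (x = i-1 ∧ g i x = i) ∨ (x ≠ i-1 ∧ x = i ∧ g i x = i-1) ∨
    (x ≠ i-1 ∧ x ≠ i ∧ g i x = x) := by
  unfold g; split_ifs <;> simp_all

theorem bsGen_apply_val {n i : ℕ} (h1 : 0 < i) (h2 : i < n) (x : Fin n) :
    (bsGen n i x).val = g i x.val := by
  rw [bsGen, dif_pos ⟨h1, h2⟩, g, Equiv.swap_apply_def]
  rcases x with ⟨x, hx⟩
  simp only [Fin.ext_iff]
  split_ifs <;> simp_all

theorem bsGen_inj {n i j : ℕ} (h1 : 0 < i) (h2 : i < n) (h3 : 0 < j) (h4 : j < n)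
    (h : bsGen n i = bsGen n j) : i = j := by
  have := congrArg (fun σ : Equiv.Perm (Fin n) => (σ ⟨i, h2⟩).val) h
  simp only [bsGen_apply_val h1 h2, bsGen_apply_val h3 h4] at this
  revert this; unfold g; split_ifs <;> omega

theorem bsGen_comm {n i j : ℕ} (h1 : 0 < i) (h2 : i < n) (h3 : 0 < j) (h4 : j < n)
    (hd : i + 2 ≤ j ∨ j + 2 ≤ i) : bsGen n i * bsGen n j = bsGen n j * bsGen n i := by
  ext x
  show ((bsGen n i) ((bsGen n j) x)).val = ((bsGen n j) ((bsGen n i) x)).val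
  rw [bsGen_apply_val h1 h2, bsGen_apply_val h3 h4, bsGen_apply_val h3 h4,
    bsGen_apply_val h1 h2]
  unfold g; split_ifs <;> omega

theorem bsGen_sign {n i : ℕ} (h1 : 0 < i) (h2 : i < n) :
    Equiv.Perm.sign (bsGen n i) = -1 := by
  rw [bsGen, dif_pos ⟨h1, h2⟩]
  exact Equiv.Perm.sign_swap (by simp [Fin.ext_iff]; omega)

set_option maxHeartbeats 4000000 in
theorem natkey (n a b c d : ℕ) (ha1 : 0 < a) (ha2 : a < n) (hb1 : 0 < b) (hb2 : b < n)
    (hc1 : 0 < c) (hc2 : c < n) (hd1 : 0 < d) (hd2 : d < n)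
    (hba : b ≠ a) (hcd : c ≠ d) (had : a ≠ d)
    (H : ∀ x, x < n → g a (g b x) = g d (g c x)) :
    b = d ∧ c = a ∧ (a + 2 ≤ d ∨ d + 2 ≤ a) := by
  have h1 := H a (by omega)
  have h2 := H d (by omega)
  have s1 := gspec b a; have s2 := gspec a (g b a); have s3 := gspec c a; have s4 := gspec d (g c a)
  have s5 := gspec b d; have s6 := gspec a (g b d); have s7 := gspec c d; have s8 := gspec d (g c d)
  omega

theorem permkey {n a b c d : ℕ} (ha1 : 0 < a) (ha2 : a < n) (hb1 : 0 < b) (hb2 : b < n)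
    (hc1 : 0 < c) (hc2 : c < n) (hd1 : 0 < d) (hd2 : d < n)
    (hba : b ≠ a) (hcd : c ≠ d) (had : a ≠ d)
    (heq : bsGen n a * bsGen n b = bsGen n d * bsGen n c) :
    b = d ∧ c = a ∧ (a + 2 ≤ d ∨ d + 2 ≤ a) := by
  refine natkey n a b c d ha1 ha2 hb1 hb2 hc1 hc2 hd1 hd2 hba hcd had (fun x hx => ?_)
  have := congrArg (fun σ : Equiv.Perm (Fin n) => (σ ⟨x, hx⟩).val) heq
  simpa only [Equiv.Perm.mul_apply, bsGen_apply_val ha1 ha2, bsGen_apply_val hb1 hb2,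
    bsGen_apply_val hc1 hc2, bsGen_apply_val hd1 hd2] using this

theorem bs_adj {n : ℕ} (π : Equiv.Perm (Fin n)) {i : ℕ} (h1 : 0 < i) (h2 : i < n) :
    (BS n).Adj π (π * bsGen n i) := ⟨i, h1, h2, rfl⟩

theorem bs_last {n : ℕ} (π : Equiv.Perm (Fin n)) {i j : ℕ}
    (hc : bsGen n i * bsGen n j = bsGen n j * bsGen n i) :
    π = π * bsGen n i * bsGen n j * bsGen n i * bsGen n j := by
  have h4 : bsGen n i * (bsGen n j * (bsGen n i * bsGen n j)) = 1 := by
    rw [← mul_assoc (bsGen n j), ← hc, mul_assoc (bsGen n i) (bsGen n j), bsGen_mul_self,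
      mul_one, bsGen_mul_self]
  simp only [mul_assoc, h4, mul_one]

theorem bs_adj_last {n : ℕ} (π : Equiv.Perm (Fin n)) {i j : ℕ} (hj1 : 0 < j) (hj2 : j < n)
    (hc : bsGen n i * bsGen n j = bsGen n j * bsGen n i) :
    (BS n).Adj (π * bsGen n i * bsGen n j * bsGen n i) π := ⟨j, hj1, hj2, bs_last π hc⟩

/-- The canonical 4-cycle walk at `π` determined by commuting generators `i, j`. -/
def cycWalk (n : ℕ) (π : Equiv.Perm (Fin n)) (i j : ℕ) (hi1 : 0 < i) (hi2 : i < n)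
    (hj1 : 0 < j) (hj2 : j < n)
    (hc : bsGen n i * bsGen n j = bsGen n j * bsGen n i) : (BS n).Walk π π :=
  .cons (bs_adj π hi1 hi2) <| .cons (bs_adj _ hj1 hj2) <| .cons (bs_adj _ hi1 hi2) <|
    .cons (bs_adj_last π hj1 hj2 hc) .nil

theorem cycWalk_isCycle {n : ℕ} (π : Equiv.Perm (Fin n)) {i j : ℕ} (hi1 : 0 < i) (hi2 : i < n)
    (hj1 : 0 < j) (hj2 : j < n) (hij : i ≠ j)
    (hc : bsGen n i * bsGen n j = bsGen n j * bsGen n i) :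
    (cycWalk n π i j hi1 hi2 hj1 hj2 hc).IsCycle := by
  have hbi : bsGen n i ≠ 1 := bsGen_ne_one n i hi1 hi2
  have hbj : bsGen n j ≠ 1 := bsGen_ne_one n j hj1 hj2
  have hbij : bsGen n i ≠ bsGen n j := fun h => hij (bsGen_inj hi1 hi2 hj1 hj2 h)
  have hbji : bsGen n j ≠ bsGen n i := hbij.symm
  have hprod : bsGen n i * bsGen n j ≠ 1 := by
    intro h
    exact hbij (by rw [← inv_eq_of_mul_eq_one_right h, eq_comm, inv_eq_iff_mul_eq_one,
      bsGen_mul_self])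
  have hprod' : bsGen n j * bsGen n i ≠ 1 := by rw [← hc]; exact hprod
  have e3 : bsGen n i * (bsGen n j * bsGen n i) = bsGen n j := by
    rw [← hc, ← mul_assoc, bsGen_mul_self, one_mul]
  rw [SimpleGraph.Walk.isCycle_def]
  simp only [cycWalk, SimpleGraph.Walk.edges_cons, SimpleGraph.Walk.support_cons,
    SimpleGraph.Walk.edges_nil, SimpleGraph.Walk.support_nil]
  refine ⟨⟨?_⟩, ?_, ?_⟩ <;>
    simp [cycWalk, SimpleGraph.Walk.isTrail_def, mul_assoc, left_eq_mul,
      mul_eq_left, e3, hbi, hbj, hprod, hprod'] <;> tauto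

set_option maxHeartbeats 1600000 in
theorem cycWalk_toSubgraph_swap {n : ℕ} (π : Equiv.Perm (Fin n)) {i j : ℕ} (hi1 : 0 < i)
    (hi2 : i < n) (hj1 : 0 < j) (hj2 : j < n)
    (hc : bsGen n i * bsGen n j = bsGen n j * bsGen n i) :
    (cycWalk n π i j hi1 hi2 hj1 hj2 hc).toSubgraph
      = (cycWalk n π j i hj1 hj2 hi1 hi2 hc.symm).toSubgraph := by
  have f1 : π * bsGen n j * bsGen n i = π * bsGen n i * bsGen n j := by
    rw [mul_assoc, ← hc, mul_assoc]
  have f2 : π * bsGen n i * bsGen n j * bsGen n i = π * bsGen n j := by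
    simp only [mul_assoc, ← hc]
    rw [← mul_assoc (bsGen n i), bsGen_mul_self, one_mul]
  have f3 : π * bsGen n j * bsGen n i * bsGen n j = π * bsGen n i := by
    simp only [mul_assoc, hc]
    rw [← mul_assoc (bsGen n j), bsGen_mul_self, one_mul]
  have f4 : π * bsGen n i * bsGen n j * bsGen n j = π * bsGen n i := by
    rw [mul_assoc (π * bsGen n i), bsGen_mul_self, mul_one]
  have f5 : π * bsGen n j * bsGen n i * bsGen n i = π * bsGen n j := by
    rw [mul_assoc (π * bsGen n j), bsGen_mul_self, mul_one]
  refine SimpleGraph.Subgraph.ext ?_ ?_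
  · ext x
    simp [cycWalk, SimpleGraph.Walk.toSubgraph, f1, f2, f3, f4, f5]
    generalize (x = π) = A1
    generalize (x = π * bsGen n i) = B1
    generalize (x = π * bsGen n j) = C1
    generalize (x = π * bsGen n i * bsGen n j) = D1
    tauto
  · ext x y
    simp [cycWalk, SimpleGraph.Walk.toSubgraph, f1, f2, f3, f4, f5, Sym2.eq_iff]
    generalize (π = x) = A1
    generalize (π = y) = A2
    generalize (π * bsGen n i = x) = B1
    generalize (π * bsGen n i = y) = B2
    generalize (π * bsGen n j = x) = C1
    generalize (π * bsGen n j = y) = C2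
    generalize (π * bsGen n i * bsGen n j = x) = D1
    generalize (π * bsGen n i * bsGen n j = y) = D2
    tauto

/-- The 4-cycle subgraph at `π` determined by a pair `p = (i, j)` with
`0 < i`, `i + 2 ≤ j`, `j < n`. -/
def cycSub (n : ℕ) (π : Equiv.Perm (Fin n)) (p : ℕ × ℕ) : (BS n).Subgraph :=
  if h : 0 < p.1 ∧ p.1 + 2 ≤ p.2 ∧ p.2 < n then
    (cycWalk n π p.1 p.2 h.1 (by omega) (by omega) h.2.2
      (bsGen_comm h.1 (by omega) (by omega) h.2.2 (Or.inl h.2.1))).toSubgraph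
  else ⊥

theorem main_set_eq (n : ℕ) (π : Equiv.Perm (Fin n)) :
    {H : (BS n).Subgraph | IsCycleSub H 4 ∧ π ∈ H.verts}
      = cycSub n π '' {p : ℕ × ℕ | 0 < p.1 ∧ p.1 + 2 ≤ p.2 ∧ p.2 < n} := by
  apply Set.Subset.antisymm
  · rintro H ⟨⟨u, w, hcyc, hlen, rfl⟩, hπ⟩
    have hπ' : π ∈ w.support := (SimpleGraph.Walk.mem_verts_toSubgraph w).mp hπ
    have hws : (w.rotate π hπ').toSubgraph = w.toSubgraph := w.toSubgraph_rotate hπ'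
    have hcyc' : (w.rotate π hπ').IsCycle := hcyc.rotate hπ'
    have hlen' : (w.rotate π hπ').length = 4 := by
      rw [← SimpleGraph.Walk.length_edges, (w.rotate_edges π hπ').perm.length_eq,
        SimpleGraph.Walk.length_edges, hlen]
    rw [← hws]
    generalize w.rotate π hπ' = w' at hcyc' hlen'
    clear hws hπ hπ' hcyc hlen w u
    cases w' with
    | nil => simp at hlen'
    | cons h1 q1 =>
    cases q1 with
    | nil => simp at hlen'
    | cons h2 q2 =>
    cases q2 with
    | nil => simp at hlen'
    | cons h3 q3 =>
    cases q3 with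
    | nil => simp at hlen'
    | cons h4 q4 =>
    cases q4 with
    | cons h5 q5 => simp [SimpleGraph.Walk.length_cons] at hlen'
    | nil =>
    obtain ⟨-, -, hnd⟩ := (SimpleGraph.Walk.isCycle_def _).mp hcyc'
    simp only [SimpleGraph.Walk.support_cons, SimpleGraph.Walk.support_nil, List.tail_cons,
      List.nodup_cons, List.mem_cons, List.mem_singleton, List.not_mem_nil,
      List.nodup_nil] at hnd
    obtain ⟨i1, hi1a, hi1b, rfl⟩ := h1
    obtain ⟨i2, hi2a, hi2b, rfl⟩ := h2
    obtain ⟨i3, hi3a, hi3b, rfl⟩ := h3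
    obtain ⟨i4, hi4a, hi4b, heq4⟩ := h4
    have hv13 : π * bsGen n i1 ≠ π * bsGen n i1 * bsGen n i2 * bsGen n i3 :=
      fun h => hnd.1 (Or.inr (Or.inl h))
    have hv2π : π * bsGen n i1 * bsGen n i2 ≠ π := fun h => hnd.2.1 (Or.inr (Or.inl h))
    have e3 : π * bsGen n i4 = π * bsGen n i1 * bsGen n i2 * bsGen n i3 := by
      conv_lhs => rw [heq4]
      rw [mul_assoc (π * bsGen n i1 * bsGen n i2 * bsGen n i3), bsGen_mul_self, mul_one]
    have ekey : bsGen n i1 * bsGen n i2 = bsGen n i4 * bsGen n i3 := by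
      have h := congrArg (· * bsGen n i3) e3
      simp only [mul_assoc, bsGen_mul_self, mul_one] at h
      exact mul_left_cancel h.symm
    have hne21 : i2 ≠ i1 := by
      intro h; subst h
      exact hv2π (by rw [mul_assoc, bsGen_mul_self, mul_one])
    have hne34 : i3 ≠ i4 := by
      intro h; subst h
      rw [bsGen_mul_self] at ekey
      exact hv2π (by rw [mul_assoc, ekey, mul_one])
    have hne14 : i1 ≠ i4 := by
      intro h
      exact hv13 (by rw [← e3, h])
    obtain ⟨hbd, hca, hdist⟩ :=
      permkey hi1a hi1b hi2a hi2b hi3a hi3b hi4a hi4b hne21 hne34 hne14 ekey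
    subst hbd; subst hca
    rcases hdist with hd | hd
    · refine ⟨(i3, i2), ⟨hi3a, hd, hi2b⟩, ?_⟩
      rw [cycSub, dif_pos (⟨hi3a, hd, hi2b⟩ : 0 < i3 ∧ i3 + 2 ≤ i2 ∧ i2 < n)]
      rfl
    · refine ⟨(i2, i3), ⟨hi2a, hd, hi3b⟩, ?_⟩
      rw [cycSub, dif_pos (⟨hi2a, hd, hi3b⟩ : 0 < i2 ∧ i2 + 2 ≤ i3 ∧ i3 < n)]
      rw [cycWalk_toSubgraph_swap]
      rfl
  · rintro H ⟨⟨i, j⟩, ⟨h1, h2, h3⟩, rfl⟩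
    rw [cycSub, dif_pos ⟨h1, h2, h3⟩]
    have hi2 : i < n := by omega
    have hj1 : 0 < j := by omega
    have hij : i ≠ j := by omega
    refine ⟨⟨π, cycWalk n π i j h1 hi2 hj1 h3 (bsGen_comm h1 hi2 hj1 h3 (Or.inl h2)),
      cycWalk_isCycle π h1 hi2 hj1 h3 hij _, rfl, rfl⟩,
      SimpleGraph.Walk.start_mem_verts_toSubgraph _⟩

theorem cycSub_verts {n : ℕ} (π : Equiv.Perm (Fin n)) {i j : ℕ}
    (h : 0 < i ∧ i + 2 ≤ j ∧ j < n) :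
    (cycSub n π (i, j)).verts
      = {π, π * bsGen n i, π * bsGen n i * bsGen n j, π * bsGen n j} := by
  obtain ⟨h1, h2, h3⟩ := h
  have hc : bsGen n i * bsGen n j = bsGen n j * bsGen n i :=
    bsGen_comm h1 (by omega) (by omega) h3 (Or.inl h2)
  have f2 : π * bsGen n i * bsGen n j * bsGen n i = π * bsGen n j := by
    simp only [mul_assoc, ← hc]
    rw [← mul_assoc (bsGen n i), bsGen_mul_self, one_mul]
  rw [cycSub, dif_pos ⟨h1, h2, h3⟩]
  ext x
  simp [cycWalk, SimpleGraph.Walk.toSubgraph, f2]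
  tauto

/-- each vertex of `BS_n`, `n ≥ 4`, lies on exactly `(n-2)(n-3)/2`
distinct 4-cycles. -/
theorem bs_four_cycles_through_vertex (n : ℕ) (hn : 4 ≤ n) (π : Equiv.Perm (Fin n)) :
    {H : (BS n).Subgraph | IsCycleSub H 4 ∧ π ∈ H.verts}.ncard = (n - 2) * (n - 3) / 2 := by
  rw [main_set_eq]
  have ne1 : ∀ k : ℕ, 0 < k → k < n → π * bsGen n k ≠ π := fun k hk1 hk2 h =>
    bsGen_ne_one n k hk1 hk2 (mul_eq_left.mp h)
  have inj' : ∀ k l : ℕ, 0 < k → k < n → 0 < l → l < n →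
      π * bsGen n k = π * bsGen n l → k = l := fun k l hk1 hk2 hl1 hl2 h =>
    bsGen_inj hk1 hk2 hl1 hl2 (mul_left_cancel h)
  have sgn : ∀ k l m : ℕ, 0 < k → k < n → 0 < l → l < n → 0 < m → m < n →
      π * bsGen n k ≠ π * bsGen n l * bsGen n m := by
    intro k l m hk1 hk2 hl1 hl2 hm1 hm2 h
    rw [mul_assoc] at h
    have hs := congrArg Equiv.Perm.sign (mul_left_cancel h)
    rw [bsGen_sign hk1 hk2, map_mul, bsGen_sign hl1 hl2, bsGen_sign hm1 hm2] at hs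
    norm_num at hs
  have hinj : Set.InjOn (cycSub n π) {p : ℕ × ℕ | 0 < p.1 ∧ p.1 + 2 ≤ p.2 ∧ p.2 < n} := by
    rintro ⟨i, j⟩ hp ⟨i', j'⟩ hq heq
    obtain ⟨h1, h2, h3⟩ := hp
    obtain ⟨h1', h2', h3'⟩ := hq
    have hAB : ({π, π * bsGen n i, π * bsGen n i * bsGen n j, π * bsGen n j} : Set _)
        = {π, π * bsGen n i', π * bsGen n i' * bsGen n j', π * bsGen n j'} := by
      rw [← cycSub_verts π ⟨h1, h2, h3⟩, ← cycSub_verts π ⟨h1', h2', h3'⟩, heq]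
    have m1 : π * bsGen n i ∈ ({π, π * bsGen n i', π * bsGen n i' * bsGen n j',
        π * bsGen n j'} : Set _) := by rw [← hAB]; simp
    have m2 : π * bsGen n j ∈ ({π, π * bsGen n i', π * bsGen n i' * bsGen n j',
        π * bsGen n j'} : Set _) := by rw [← hAB]; simp
    simp only [Set.mem_insert_iff, Set.mem_singleton_iff] at m1 m2
    have d1 : i = i' ∨ i = j' := by
      rcases m1 with h | h | h | h
      · exact absurd h (ne1 i h1 (by omega))
      · exact Or.inl (inj' _ _ h1 (by omega) h1' (by omega) h)
      · exact absurd h (sgn i i' j' h1 (by omega) h1' (by omega) (by omega) h3')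
      · exact Or.inr (inj' _ _ h1 (by omega) (by omega) h3' h)
    have d2 : j = i' ∨ j = j' := by
      rcases m2 with h | h | h | h
      · exact absurd h (ne1 j (by omega) h3)
      · exact Or.inl (inj' _ _ (by omega) h3 h1' (by omega) h)
      · exact absurd h (sgn j i' j' (by omega) h3 h1' (by omega) (by omega) h3')
      · exact Or.inr (inj' _ _ (by omega) h3 (by omega) h3' h)
    have : i = i' ∧ j = j' := by omega
    rw [Prod.mk.injEq]
    exact this
  rw [Set.ncard_image_of_injOn hinj]
  have hset : {p : ℕ × ℕ | 0 < p.1 ∧ p.1 + 2 ≤ p.2 ∧ p.2 < n}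
      = ↑(((Finset.range (n-2)).sigma fun j => Finset.range j).image
          fun q => (q.2 + 1, q.1 + 2)) := by
    ext ⟨a, b⟩
    simp only [Set.mem_setOf_eq, Finset.coe_image, Set.mem_image, Finset.mem_coe,
      Finset.mem_sigma, Finset.mem_range, Prod.mk.injEq]
    constructor
    · rintro ⟨h1, h2, h3⟩
      refine ⟨⟨b - 2, a - 1⟩, ⟨?_, ?_⟩, ?_, ?_⟩ <;> simp <;> omega
    · rintro ⟨⟨x, y⟩, ⟨hx, hy⟩, h1, h2⟩
      omega
  rw [hset, Set.ncard_coe_finset]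
  rw [Finset.card_image_of_injOn]
  · rw [Finset.card_sigma]
    simp only [Finset.card_range]
    rw [Finset.sum_range_id]
    have : n - 2 - 1 = n - 3 := by omega
    rw [this]
  · rintro ⟨x, y⟩ _ ⟨x', y'⟩ _ h
    simp only [Prod.mk.injEq] at h
    obtain ⟨rfl, rfl⟩ : x = x' ∧ y = y' := by omega
    rfl
end

section
/- For every n ≥ 3, the n-prism, i.e. the box (Cartesian) product C_n □ K_2 of the cycle graph on n vertices with the complete graph on 2 vertices, is Hamilton-connected if and only if n is odd. -/
open SimpleGraph List
open Fin.NatCast Fin.CommRing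

namespace PrismAux


variable {V : Type*} {G : SimpleGraph V}

/-- Build a walk from a chain of adjacencies. -/
def walkOfChain : (u : V) → (l : List V) → List.Chain G.Adj u l →
    G.Walk u ((u :: l).getLast (List.cons_ne_nil _ _))
  | _, [], _ => SimpleGraph.Walk.nil
  | u, v :: l, h =>
    SimpleGraph.Walk.cons (List.chain_cons.mp h).1
      ((walkOfChain v l (List.chain_cons.mp h).2).copy rfl
        (by rw [List.getLast_cons (List.cons_ne_nil _ _)]))

lemma support_walkOfChain : ∀ (u : V) (l : List V) (h : List.Chain G.Adj u l),
    (walkOfChain u l h).support = u :: l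
  | _, [], _ => rfl
  | u, v :: l, h => by
    simp [walkOfChain, SimpleGraph.Walk.support_copy, support_walkOfChain v l]
    exact support_walkOfChain v l _

def walkOfChain' : (l : List V) → (hne : l ≠ []) → List.Chain' G.Adj l →
    G.Walk (l.head hne) (l.getLast hne)
  | u :: rest, _, h => walkOfChain u rest h

lemma support_walkOfChain' : ∀ (l : List V) (hne) (h),
    (walkOfChain' (G := G) l hne h).support = l
  | _ :: rest, _, h => support_walkOfChain _ rest h


/-- Abstract adjacency on `ℕ × Fin 2` (ladder moves). -/
def R (x y : ℕ × Fin 2) : Prop :=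
  (x.1 = y.1 ∧ x.2 ≠ y.2) ∨ (x.2 = y.2 ∧ (y.1 = x.1 + 1 ∨ x.1 = y.1 + 1))

lemma R_symm {x y : ℕ × Fin 2} (h : R x y) : R y x := by
  unfold R at *; tauto

def c (m : ℕ) (x : ℕ × Fin 2) : Fin (m + 3) × Fin 2 := ((x.1 : Fin (m + 3)), x.2)

lemma cycle_adj_succ (m j : ℕ) :
    (cycleGraph (m + 3)).Adj (j : Fin (m + 3)) ((j + 1 : ℕ) : Fin (m + 3)) := by
  rw [cycleGraph_adj']
  right
  have h : ((j + 1 : ℕ) : Fin (m + 3)) - (j : Fin (m + 3)) = 1 := by push_cast; ring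
  rw [h, Fin.val_one]

lemma adj_of_R {m : ℕ} {x y : ℕ × Fin 2} (h : R x y) :
    (cycleGraph (m + 3) □ (⊤ : SimpleGraph (Fin 2))).Adj (c m x) (c m y) := by
  obtain ⟨h1, h2⟩ | ⟨h1, h2 | h2⟩ := h
  · apply SimpleGraph.boxProd_adj.2
    right
    refine ⟨by simpa [c] using h2, by simp [c, h1]⟩
  · apply SimpleGraph.boxProd_adj.2
    left
    refine ⟨?_, by simp [c, h1]⟩
    simpa [c, h2] using cycle_adj_succ m x.1
  · apply SimpleGraph.boxProd_adj.2
    left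
    refine ⟨?_, by simp [c, h1]⟩
    simpa [c, h2] using (cycle_adj_succ m y.1).symm

end PrismAux

namespace PrismAux

def col (j : ℕ) : List (ℕ × Fin 2) :=
  if j % 2 = 0 then [(j, 0), (j, 1)] else [(j, 1), (j, 0)]

lemma col_ne (j : ℕ) : col j ≠ [] := by unfold col; split <;> simp

lemma mem_col {x : ℕ × Fin 2} {j : ℕ} : x ∈ col j ↔ x.1 = j := by
  obtain ⟨i, s⟩ := x
  unfold col
  fin_cases s <;> split <;> simp [Prod.ext_iff]

lemma col_nodup (j : ℕ) : (col j).Nodup := by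
  unfold col; split <;> simp [Prod.ext_iff]

lemma col_chain' (j : ℕ) : List.Chain' R (col j) := by
  unfold col; split <;> simp [R, List.Chain']

lemma col_head? (j : ℕ) :
    (col j).head? = some (j, if j % 2 = 0 then 0 else 1) := by
  unfold col; split <;> simp

lemma col_getLast? (j : ℕ) :
    (col j).getLast? = some (j, if j % 2 = 0 then 1 else 0) := by
  unfold col; split <;> simp

def S : ℕ → List (ℕ × Fin 2)
  | 0 => []
  | k + 1 => S k ++ col k

lemma mem_S {x : ℕ × Fin 2} : ∀ {k : ℕ}, x ∈ S k ↔ x.1 < k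
  | 0 => by simp [S]
  | k + 1 => by
    simp only [S, List.mem_append, mem_S (k := k), mem_col]
    omega

lemma S_nodup : ∀ k, (S k).Nodup
  | 0 => by simp [S]
  | k + 1 => by
    refine (S_nodup k).append (col_nodup k) ?_
    intro x hx hx'
    rw [mem_S] at hx
    rw [mem_col] at hx'
    omega

lemma S_getLast? (k : ℕ) :
    (S (k + 1)).getLast? = some (k, if k % 2 = 0 then 1 else 0) := by
  rw [S, List.getLast?_append_of_ne_nil _ (col_ne k), col_getLast?]

lemma S_head? : ∀ k : ℕ, (S (k + 1)).head? = some (0, 0)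
  | 0 => by simp [S, col]
  | k + 1 => by
    have hne : S (k + 1) ≠ [] := by
      intro h
      have := (mem_S (x := ((0 : ℕ), (0 : Fin 2))) (k := k + 1)).mpr (by omega)
      rw [h] at this
      simp at this
    rw [S, List.head?_append_of_ne_nil _ hne]
    exact S_head? k

lemma S_chain' : ∀ k, List.Chain' R (S k)
  | 0 => by simp [S, List.Chain']
  | k + 1 => by
    refine (S_chain' k).append (col_chain' k) ?_
    intro x hx y hy
    match k, hx with
    | 0, hx => simp [S] at hx
    | k' + 1, hx =>
      rw [S_getLast? k'] at hx
      rw [col_head?] at hy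
      simp only [Option.mem_def, Option.some.injEq] at hx hy
      subst hx; subst hy
      right
      constructor
      · rcases Nat.even_or_odd k' with h | h
        · have h1 : k' % 2 = 0 := Nat.even_iff.mp h
          have h2 : (k' + 1) % 2 = 1 := by omega
          simp [h1, h2]
        · have h1 : k' % 2 = 1 := Nat.odd_iff.mp h
          have h2 : (k' + 1) % 2 = 0 := by omega
          simp [h1, h2]
      · left; rfl

def fwd (a mm : ℕ) (s : Fin 2) : List (ℕ × Fin 2) :=
  (List.range mm).map (fun j => (a + j, s))

lemma mem_fwd {x : ℕ × Fin 2} {a mm : ℕ} {s : Fin 2} :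
    x ∈ fwd a mm s ↔ x.2 = s ∧ a ≤ x.1 ∧ x.1 < a + mm := by
  obtain ⟨i, t⟩ := x
  simp only [fwd, List.mem_map, List.mem_range, Prod.mk.injEq]
  constructor
  · rintro ⟨j, hj, h1, h2⟩
    subst h1 h2
    exact ⟨rfl, by omega, by omega⟩
  · rintro ⟨rfl, h1, h2⟩
    exact ⟨i - a, by omega, by omega, rfl⟩

lemma fwd_nodup (a mm : ℕ) (s : Fin 2) : (fwd a mm s).Nodup :=
  (List.nodup_range (n := mm)).map (fun i j h => by simpa using congrArg Prod.fst h)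

lemma fwd_head? (a mm : ℕ) (s : Fin 2) (h : mm ≠ 0) :
    (fwd a mm s).head? = some (a, s) := by
  obtain ⟨q, rfl⟩ := Nat.exists_eq_succ_of_ne_zero h
  rw [fwd, List.range_succ_eq_map]
  simp

lemma fwd_getLast? (a mm : ℕ) (s : Fin 2) (h : mm ≠ 0) :
    (fwd a mm s).getLast? = some (a + (mm - 1), s) := by
  obtain ⟨q, rfl⟩ := Nat.exists_eq_succ_of_ne_zero h
  rw [fwd, List.range_succ, List.map_append]
  simp

lemma fwd_chain' (a : ℕ) (s : Fin 2) : ∀ mm, List.Chain' R (fwd a mm s)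
  | 0 => by simp [fwd, List.Chain']
  | mm + 1 => by
    rw [fwd, List.range_succ, List.map_append]
    refine (fwd_chain' a s mm).append (by simp) ?_
    intro x hx y hy
    match mm, hx with
    | mm' + 1, hx =>
      rw [fwd_getLast? a _ s (by omega)] at hx
      simp only [Option.mem_def, Option.some.injEq, List.map_cons, List.head?_cons] at hx hy
      subst hx; subst hy
      right
      exact ⟨rfl, Or.inl (by omega)⟩

end PrismAux

namespace PrismAux

def Lst (nn k : ℕ) (t : Fin 2) : List (ℕ × Fin 2) :=
  S k ++ (fwd k (nn - k) (1 - t) ++ (fwd k (nn - k) t).reverse)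

variable {nn k : ℕ} {t : Fin 2}

lemma fwd_ne_nil (hk : k < nn) (s : Fin 2) : fwd k (nn - k) s ≠ [] := by
  simp only [fwd, ne_eq, List.map_eq_nil_iff, List.range_eq_nil]
  omega

lemma mem_Lst (hk : k < nn) {i : ℕ} (hi : i < nn) (s : Fin 2) : (i, s) ∈ Lst nn k t := by
  unfold Lst
  rcases lt_or_ge i k with h | h
  · exact List.mem_append_left _ (mem_S.mpr h)
  · apply List.mem_append_right
    have hst : s = 1 - t ∨ s = t := by fin_cases s <;> fin_cases t <;> simp
    rcases hst with rfl | rfl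
    · exact List.mem_append_left _ (mem_fwd.mpr ⟨rfl, h, by omega⟩)
    · exact List.mem_append_right _ (List.mem_reverse.mpr (mem_fwd.mpr ⟨rfl, h, by omega⟩))

lemma Lst_fst_lt (hk : k ≤ nn) {x : ℕ × Fin 2} (hx : x ∈ Lst nn k t) : x.1 < nn := by
  unfold Lst at hx
  rcases List.mem_append.mp hx with h | h
  · have := mem_S.mp h; omega
  · rcases List.mem_append.mp h with h | h
    · have := mem_fwd.mp h; omega
    · have := mem_fwd.mp (List.mem_reverse.mp h); omega

lemma Lst_nodup (hk : k < nn) : (Lst nn k t).Nodup := by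
  unfold Lst
  refine (S_nodup k).append ?_ ?_
  · refine (fwd_nodup _ _ _).append (List.nodup_reverse.mpr (fwd_nodup _ _ _)) ?_
    intro x hx hx'
    have h1 := mem_fwd.mp hx
    have h2 := mem_fwd.mp (List.mem_reverse.mp hx')
    have : (1 - t) ≠ t := by fin_cases t <;> simp
    exact this (h1.1 ▸ h2.1 ▸ rfl)
  · intro x hx hx'
    have h1 := mem_S.mp hx
    rcases List.mem_append.mp hx' with h | h
    · have := mem_fwd.mp h; omega
    · have := mem_fwd.mp (List.mem_reverse.mp h); omega

lemma Lst_chain' (hk : k < nn) (hpar : (k + t.val) % 2 = 1) :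
    List.Chain' R (Lst nn k t) := by
  unfold Lst
  have hmm : nn - k ≠ 0 := by omega
  refine (S_chain' k).append ?_ ?_
  · refine (fwd_chain' k (1 - t) _).append
      (List.isChain_reverse.mpr ((fwd_chain' k t _).imp fun a b h => R_symm h)) ?_
    intro x hx y hy
    rw [fwd_getLast? _ _ _ hmm] at hx
    rw [List.head?_reverse, fwd_getLast? _ _ _ hmm] at hy
    simp only [Option.mem_def, Option.some.injEq] at hx hy
    subst hx; subst hy
    left
    exact ⟨rfl, by fin_cases t <;> simp⟩
  · intro x hx y hy
    match k, hpar, hx with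
    | k' + 1, hpar, hx =>
      rw [S_getLast?] at hx
      rw [List.head?_append_of_ne_nil _ (fwd_ne_nil hk _), fwd_head? _ _ _ hmm] at hy
      simp only [Option.mem_def, Option.some.injEq] at hx hy
      subst hx; subst hy
      right
      refine ⟨?_, Or.inl rfl⟩
      fin_cases t
      · simp only [Fin.val_zero, Nat.add_zero] at hpar
        have : k' % 2 = 0 := by omega
        simp [this]
      · simp only [Fin.val_one] at hpar
        have : k' % 2 = 1 := by omega
        simp [this]

lemma Lst_head? (hk : k < nn) (hpar : (k + t.val) % 2 = 1) :
    (Lst nn k t).head? = some (0, 0) := by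
  unfold Lst
  match k, hpar with
  | 0, hpar =>
    have ht : t = 1 := by fin_cases t <;> simp_all
    subst ht
    show (List.nil ++ _).head? = _
    rw [List.nil_append, List.head?_append_of_ne_nil _ (fwd_ne_nil hk _),
      fwd_head? _ _ _ (by omega)]
    norm_num
  | k' + 1, hpar =>
    have hne : S (k' + 1) ≠ [] := by
      intro h
      have := (mem_S (x := ((0 : ℕ), (0 : Fin 2))) (k := k' + 1)).mpr (by omega)
      rw [h] at this
      simp at this
    rw [List.head?_append_of_ne_nil _ hne]
    exact S_head? k'

lemma Lst_getLast? (hk : k < nn) :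
    (Lst nn k t).getLast? = some (k, t) := by
  unfold Lst
  have hrev : (fwd k (nn - k) t).reverse ≠ [] := by
    simp [fwd_ne_nil hk t]
  rw [List.getLast?_append_of_ne_nil _ (by simp [hrev]),
    List.getLast?_append_of_ne_nil _ hrev, List.getLast?_reverse,
    fwd_head? _ _ _ (by omega)]

end PrismAux

namespace PrismAux

lemma exists_ham_canonical (m k : ℕ) (t : Fin 2) (hk : k < m + 3)
    (hpar : (k + t.val) % 2 = 1) :
    ∃ p : (cycleGraph (m + 3) □ (⊤ : SimpleGraph (Fin 2))).Walk
        ((0 : Fin (m + 3)), (0 : Fin 2)) ((k : Fin (m + 3)), t),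
      p.IsHamiltonian := by
  set G := cycleGraph (m + 3) □ (⊤ : SimpleGraph (Fin 2)) with hG
  set ML : List (Fin (m + 3) × Fin 2) := (Lst (m + 3) k t).map (c m) with hML
  have hLne : Lst (m + 3) k t ≠ [] := by
    intro h
    have := Lst_head? hk hpar
    rw [h] at this
    simp at this
  have hne : ML ≠ [] := by simp [hML, hLne]
  have hch : List.Chain' G.Adj ML := by
    rw [hML, List.Chain', List.isChain_map]
    exact (Lst_chain' hk hpar).imp fun a b h => adj_of_R h
  have hhead : ML.head hne = ((0 : Fin (m + 3)), (0 : Fin 2)) := by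
    have h1 : ML.head? = some (ML.head hne) := List.head?_eq_head hne
    have h2 : ML.head? = some ((0 : Fin (m + 3)), (0 : Fin 2)) := by
      rw [hML, List.head?_map, Lst_head? hk hpar]
      simp [c]
    rw [h2] at h1
    exact (Option.some_injective _ h1).symm
  have hlast : ML.getLast hne = ((k : Fin (m + 3)), t) := by
    have h1 : ML.getLast? = some (ML.getLast hne) := List.getLast?_eq_getLast_of_ne_nil hne
    have h2 : ML.getLast? = some ((k : Fin (m + 3)), t) := by
      rw [hML, List.getLast?_map, Lst_getLast? hk]
      simp [c]
    rw [h2] at h1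
    exact (Option.some_injective _ h1).symm
  refine ⟨(walkOfChain' ML hne hch).copy hhead hlast, ?_⟩
  have hsupp : ((walkOfChain' ML hne hch).copy hhead hlast).support = ML := by
    rw [SimpleGraph.Walk.support_copy, support_walkOfChain']
  intro w
  rw [hsupp]
  have hmem : w ∈ ML := by
    obtain ⟨i, s⟩ := w
    rw [hML, List.mem_map]
    refine ⟨(i.val, s), mem_Lst hk i.isLt s, ?_⟩
    simp [c, Fin.cast_val_eq_self]
  have hnd : ML.Nodup := by
    rw [hML]
    refine (Lst_nodup hk).map_on ?_
    intro x hx y hy hxy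
    have hx1 := Lst_fst_lt (le_of_lt hk) hx
    have hy1 := Lst_fst_lt (le_of_lt hk) hy
    simp only [c, Prod.mk.injEq] at hxy
    have : x.1 = y.1 := by
      have := congrArg Fin.val hxy.1
      rwa [Fin.val_cast_of_lt hx1, Fin.val_cast_of_lt hy1] at this
    exact Prod.ext this hxy.2
  exact @List.count_eq_one_of_mem _ instBEqOfDecidableEq _ _ _ hnd hmem

end PrismAux

namespace PrismAux

lemma isHamiltonian_copy {V : Type*} [DecidableEq V] {G : SimpleGraph V} {u v u' v' : V}
    (p : G.Walk u v) (h1 : u = u') (h2 : v = v') :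
    (p.copy h1 h2).IsHamiltonian ↔ p.IsHamiltonian := by
  subst h1; subst h2; rfl

def transIso (m : ℕ) (a : Fin (m + 3)) (b : Fin 2) :
    (cycleGraph (m + 3) □ (⊤ : SimpleGraph (Fin 2))) ≃g
      (cycleGraph (m + 3) □ (⊤ : SimpleGraph (Fin 2))) where
  toFun x := (x.1 + a, x.2 + b)
  invFun x := (x.1 - a, x.2 - b)
  left_inv x := by simp
  right_inv x := by simp
  map_rel_iff' := by
    intro x y
    simp [boxProd_adj, cycleGraph_adj', top_adj, add_sub_add_right_eq_sub, add_left_inj]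

def reflIso (m : ℕ) :
    (cycleGraph (m + 3) □ (⊤ : SimpleGraph (Fin 2))) ≃g
      (cycleGraph (m + 3) □ (⊤ : SimpleGraph (Fin 2))) where
  toFun x := (-x.1, x.2)
  invFun x := (-x.1, x.2)
  left_inv x := by simp
  right_inv x := by simp
  map_rel_iff' := by
    intro x y
    simp only [Equiv.coe_fn_mk, boxProd_adj, cycleGraph_adj', top_adj, neg_sub_neg, neg_inj]
    tauto

lemma exists_ham_from_zero (m : ℕ) (hodd : Odd (m + 3)) (w : Fin (m + 3) × Fin 2)
    (hw : w ≠ ((0 : Fin (m + 3)), (0 : Fin 2))) :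
    ∃ p : (cycleGraph (m + 3) □ (⊤ : SimpleGraph (Fin 2))).Walk
        ((0 : Fin (m + 3)), (0 : Fin 2)) w, p.IsHamiltonian := by
  obtain ⟨i, t⟩ := w
  by_cases hpar : (i.val + t.val) % 2 = 1
  · obtain ⟨p, hp⟩ := exists_ham_canonical m i.val t i.isLt hpar
    exact ⟨p.copy rfl (by simp [Fin.cast_val_eq_self]),
      (isHamiltonian_copy p rfl _).mpr hp⟩
  · have hi : i.val ≠ 0 := by
      intro h
      apply hw
      have ht : t.val = 0 := by have := t.isLt; omega
      have : i = 0 := Fin.ext (by simpa using h)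
      subst this
      exact Prod.ext rfl (Fin.ext (by simpa using ht))
    have h0 : (i.val + t.val) % 2 = 0 := by omega
    have hodd' : (m + 3) % 2 = 1 := Nat.odd_iff.mp hodd
    have hk' : (m + 3) - i.val < m + 3 := by omega
    have hpar' : ((m + 3) - i.val + t.val) % 2 = 1 := by
      have := i.isLt
      have := t.isLt
      omega
    obtain ⟨p, hp⟩ := exists_ham_canonical m ((m + 3) - i.val) t hk' hpar'
    let e := reflIso m
    have he0 : e ((0 : Fin (m + 3)), (0 : Fin 2)) = ((0 : Fin (m + 3)), (0 : Fin 2)) := by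
      show ((-(0 : Fin (m + 3)), (0 : Fin 2)) : Fin (m + 3) × Fin 2) = _
      simp
    have hek : e (((((m + 3) - i.val : ℕ) : Fin (m + 3)), t)) = (i, t) := by
      show ((-(((m + 3) - i.val : ℕ) : Fin (m + 3)), t) : Fin (m + 3) × Fin 2) = _
      have h1 : ((((m + 3) - i.val : ℕ)) : Fin (m + 3)) = -(i.val : Fin (m + 3)) := by
        rw [Nat.cast_sub (le_of_lt i.isLt), Fin.natCast_self, zero_sub]
      rw [h1, neg_neg, Fin.cast_val_eq_self]
    refine ⟨(p.map e.toHom).copy he0 hek, ?_⟩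
    rw [isHamiltonian_copy]
    exact hp.map e.toHom e.toEquiv.bijective

end PrismAux

namespace PrismAux

def clr (m : ℕ) (x : Fin (m + 3) × Fin 2) : ZMod 2 := ((x.1.val + x.2.val : ℕ) : ZMod 2)

lemma nat_parity_step {n va vb : ℕ} (hn2 : n % 2 = 0) (hva : va < n) (hvb : vb < n)
    (h : ((n - vb) + va) % n = 1) : (va + vb) % 2 = 1 := by
  rcases Nat.lt_or_ge ((n - vb) + va) n with hlt | hge
  · rw [Nat.mod_eq_of_lt hlt] at h
    omega
  · rw [Nat.mod_eq_sub_mod hge, Nat.mod_eq_of_lt (by omega)] at h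
    omega

lemma cast_parity {a b : ℕ} (h : (a + b) % 2 = 1) : (a : ZMod 2) = (b : ZMod 2) + 1 := by
  have h1 : ((a + b : ℕ) : ZMod 2) = 1 := by
    rw [← ZMod.natCast_mod, h]
    norm_num
  push_cast at h1
  have := eq_sub_of_add_eq h1
  rw [this, sub_eq_add_neg, CharTwo.neg_eq, add_comm]

lemma clr_adj {m : ℕ} (heven : (m + 3) % 2 = 0) {x y : Fin (m + 3) × Fin 2}
    (h : (cycleGraph (m + 3) □ (⊤ : SimpleGraph (Fin 2))).Adj x y) :
    clr m y = clr m x + 1 := by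
  have key : (x.1.val + x.2.val + (y.1.val + y.2.val)) % 2 = 1 := by
    rcases boxProd_adj.mp h with ⟨hc, h2⟩ | ⟨hc, h1⟩
    · rw [cycleGraph_adj'] at hc
      have h2v : x.2.val = y.2.val := by rw [h2]
      rcases hc with hc | hc
      · rw [Fin.sub_def] at hc
        simp only at hc
        have := nat_parity_step heven x.1.isLt y.1.isLt hc
        omega
      · rw [Fin.sub_def] at hc
        simp only at hc
        have := nat_parity_step heven y.1.isLt x.1.isLt hc
        omega
    · have h1v : x.1.val = y.1.val := by rw [h1]
      have hne : x.2.val ≠ y.2.val := fun hh => ((SimpleGraph.top_adj _ _).mp hc) (Fin.ext hh)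
      have := x.2.isLt
      have := y.2.isLt
      omega
  have := cast_parity (a := y.1.val + y.2.val) (b := x.1.val + x.2.val) (by omega)
  simpa [clr] using this

lemma clr_walk {m : ℕ} (heven : (m + 3) % 2 = 0) {u v : Fin (m + 3) × Fin 2}
    (p : (cycleGraph (m + 3) □ (⊤ : SimpleGraph (Fin 2))).Walk u v) :
    clr m v = clr m u + p.length := by
  induction p with
  | nil => simp
  | @cons a b c h q ih =>
    rw [SimpleGraph.Walk.length_cons, ih, clr_adj heven h]
    push_cast
    ring

end PrismAux

open PrismAux in
/-- for `n ≥ 3`, the `n`-prism `C_n □ K_2` is Hamilton-connected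
(every two distinct vertices are joined by a Hamiltonian path) iff `n` is odd. -/
theorem prism_hamilton_connected_iff_odd (n : ℕ) (hn : 3 ≤ n) :
    (∀ u v : Fin n × Fin 2, u ≠ v →
        ∃ p : (SimpleGraph.cycleGraph n □ (⊤ : SimpleGraph (Fin 2))).Walk u v,
          p.IsHamiltonian) ↔ Odd n := by
  obtain ⟨m, rfl⟩ : ∃ m, n = m + 3 := ⟨n - 3, by omega⟩
  constructor
  · intro h
    by_contra hodd
    rw [Nat.not_odd_iff_even, Nat.even_iff] at hodd
    set u : Fin (m + 3) × Fin 2 := (((0 : ℕ) : Fin (m + 3)), 0) with hu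
    set v : Fin (m + 3) × Fin 2 := (((2 : ℕ) : Fin (m + 3)), 0) with hv
    have huv : u ≠ v := by
      intro hh
      have := congrArg (fun x => (Prod.fst x).val) hh
      simp only [hu, hv] at this
      rw [Fin.val_cast_of_lt (by omega), Fin.val_cast_of_lt (by omega)] at this
      omega
    obtain ⟨p, hp⟩ := h u v huv
    have hlen : p.length = 2 * (m + 3) - 1 := by
      rw [hp.length_eq]
      simp only [Fintype.card_prod, Fintype.card_fin]
      omega
    have hclr := clr_walk hodd p
    rw [hlen] at hclr
    have hcu : clr m u = 0 := by
      simp [clr, hu, Fin.val_cast_of_lt (show 0 < m + 3 by omega)]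
    have hcv : clr m v = 0 := by
      simp only [clr, hv]
      rw [Fin.val_cast_of_lt (show 2 < m + 3 by omega)]
      norm_num
      decide
    have hcast : ((2 * (m + 3) - 1 : ℕ) : ZMod 2) = 1 := by
      have h2 : 2 * (m + 3) - 1 = 2 * (m + 2) + 1 := by omega
      rw [h2]
      push_cast
      rw [(by decide : (2 : ZMod 2) = 0)]
      ring
    rw [hcu, hcv, hcast] at hclr
    simp at hclr
  · intro hodd u v huv
    let e := transIso m u.1 u.2
    have he0 : e (((0 : Fin (m + 3)), (0 : Fin 2))) = u := by
      show ((0 + u.1, 0 + u.2) : Fin (m + 3) × Fin 2) = u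
      simp
    set w := e.symm v with hw
    have hew : e w = v := by
      rw [hw]
      exact e.toEquiv.apply_symm_apply v
    have hwne : w ≠ ((0 : Fin (m + 3)), (0 : Fin 2)) := by
      intro hh
      apply huv
      rw [← he0, ← hew, hh]
    obtain ⟨p, hp⟩ := exists_ham_from_zero m hodd w hwne
    refine ⟨(p.map e.toHom).copy he0 hew, ?_⟩
    rw [isHamiltonian_copy]
    exact hp.map e.toHom e.toEquiv.bijective
end

section
/- Let P be the 6-prism C_6 □ K_2 with vertex set (ZMod 6) × (Fin 2), where (a, s) is adjacent to (b, t) iff (s = t and b = a ± 1) or (a = b and s ≠ t), and let M be the perfect-matching-like set of six cycle edges {(0,s),(1,s)}, {(2,s),(3,s)}, {(4,s),(5,s)} for s ∈ Fin 2 (an alternating set of cycle edges, playing the role of the b_{k−1}-edges of the prism P_6(i,k) in the Bubble-sort graph). Then for every vertex u of P and every edge e ∈ M there exists an endpoint v of e such that the distance d(u, v) in P is odd and there is a Hamiltonian path in P from u to v. -/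
/-- The 6-prism on `(ZMod 6) × (Fin 2)`: `(a, s)` is adjacent to `(b, t)` iff
(`s = t` and `b = a ± 1`) or (`a = b` and `s ≠ t`). -/
def prism6 : SimpleGraph (ZMod 6 × Fin 2) where
  Adj u v := (u.2 = v.2 ∧ (v.1 = u.1 + 1 ∨ v.1 = u.1 - 1)) ∨ (u.1 = v.1 ∧ u.2 ≠ v.2)
  symm := by
    constructor
    rintro ⟨a, s⟩ ⟨b, t⟩ h
    revert h; revert s t; revert a b; decide
  loopless := by
    constructor
    rintro ⟨a, s⟩ h
    revert h; revert s; revert a; decide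

/-- The six "cycle edges" `{(0,s),(1,s)}, {(2,s),(3,s)}, {(4,s),(5,s)}`, `s ∈ Fin 2`,
playing the role of the `b_{k-1}`-edges of the prism `P_6(i,k)`. -/
def prism6M : Set (Sym2 (ZMod 6 × Fin 2)) :=
  {e | ∃ (s : Fin 2) (a : ZMod 6), (a = 0 ∨ a = 2 ∨ a = 4) ∧ e = s((a, s), (a + 1, s))}

namespace Prism6Aux

abbrev V := ZMod 6 × Fin 2

/-- bipartite coloring -/
def col (x : V) : ℕ := (x.1.val + x.2.val) % 2

lemma col_lt_two (x : V) : col x < 2 := Nat.mod_lt _ (by norm_num)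

instance : DecidableRel prism6.Adj := fun u v =>
  inferInstanceAs (Decidable ((u.2 = v.2 ∧ (v.1 = u.1 + 1 ∨ v.1 = u.1 - 1)) ∨ (u.1 = v.1 ∧ u.2 ≠ v.2)))

lemma adj_col : ∀ x y : V, prism6.Adj x y → col x ≠ col y := by decide

lemma walk_parity : ∀ {u v : V} (p : prism6.Walk u v),
    (p.length % 2 = 0 ↔ col u = col v) := by
  intro u v p
  induction p with
  | nil => simp
  | @cons u b v h p ih =>
    have h1 := adj_col _ _ h
    have h2 := col_lt_two u
    have h3 := col_lt_two b
    have h4 := col_lt_two v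
    simp only [SimpleGraph.Walk.length_cons]
    omega

/-- Build a walk from a chain of adjacent vertices. -/
def mkWalk : (l : List V) → (hl : l ≠ []) → l.Chain' prism6.Adj →
    prism6.Walk (l.head hl) (l.getLast hl)
  | [_], _, _ => SimpleGraph.Walk.nil
  | _ :: b :: l, _, h =>
    SimpleGraph.Walk.cons (List.isChain_cons_cons.mp h).1
      (mkWalk (b :: l) (by simp) (show (b :: l).Chain' prism6.Adj from (List.isChain_cons_cons.mp h).2))

lemma mkWalk_support : ∀ (l : List V) (hl : l ≠ []) (hc : l.Chain' prism6.Adj),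
    (mkWalk l hl hc).support = l
  | [_], _, _ => rfl
  | a :: b :: l, _, h => by
    exact congrArg (a :: ·) (mkWalk_support (b :: l) _ _)

def tbl : List (List V) :=
 [[],
 [(0,0), (1,0), (1,1), (2,1), (2,0), (3,0), (3,1), (4,1), (4,0), (5,0), (5,1), (0,1)],
 [(0,0), (0,1), (1,1), (2,1), (3,1), (4,1), (5,1), (5,0), (4,0), (3,0), (2,0), (1,0)],
 [],
 [],
 [(0,0), (0,1), (1,1), (1,0), (2,0), (3,0), (4,0), (5,0), (5,1), (4,1), (3,1), (2,1)],
 [(0,0), (0,1), (1,1), (1,0), (2,0), (2,1), (3,1), (4,1), (5,1), (5,0), (4,0), (3,0)],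
 [],
 [],
 [(0,0), (0,1), (1,1), (1,0), (2,0), (2,1), (3,1), (3,0), (4,0), (5,0), (5,1), (4,1)],
 [(0,0), (0,1), (1,1), (1,0), (2,0), (2,1), (3,1), (3,0), (4,0), (4,1), (5,1), (5,0)],
 [],
 [(0,1), (1,1), (1,0), (2,0), (2,1), (3,1), (3,0), (4,0), (4,1), (5,1), (5,0), (0,0)],
 [],
 [],
 [(0,1), (0,0), (1,0), (2,0), (3,0), (4,0), (5,0), (5,1), (4,1), (3,1), (2,1), (1,1)],
 [(0,1), (0,0), (1,0), (1,1), (2,1), (3,1), (4,1), (5,1), (5,0), (4,0), (3,0), (2,0)],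
 [],
 [],
 [(0,1), (0,0), (1,0), (1,1), (2,1), (2,0), (3,0), (4,0), (5,0), (5,1), (4,1), (3,1)],
 [(0,1), (0,0), (1,0), (1,1), (2,1), (2,0), (3,0), (3,1), (4,1), (5,1), (5,0), (4,0)],
 [],
 [],
 [(0,1), (0,0), (1,0), (1,1), (2,1), (2,0), (3,0), (3,1), (4,1), (4,0), (5,0), (5,1)],
 [(1,0), (1,1), (0,1), (5,1), (4,1), (3,1), (2,1), (2,0), (3,0), (4,0), (5,0), (0,0)],
 [],
 [],
 [(1,0), (0,0), (0,1), (5,1), (5,0), (4,0), (4,1), (3,1), (3,0), (2,0), (2,1), (1,1)],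
 [(1,0), (0,0), (0,1), (1,1), (2,1), (3,1), (4,1), (5,1), (5,0), (4,0), (3,0), (2,0)],
 [],
 [],
 [(1,0), (0,0), (0,1), (1,1), (2,1), (2,0), (3,0), (4,0), (5,0), (5,1), (4,1), (3,1)],
 [(1,0), (0,0), (0,1), (1,1), (2,1), (2,0), (3,0), (3,1), (4,1), (5,1), (5,0), (4,0)],
 [],
 [],
 [(1,0), (0,0), (0,1), (1,1), (2,1), (2,0), (3,0), (3,1), (4,1), (4,0), (5,0), (5,1)],
 [],
 [(1,1), (1,0), (0,0), (5,0), (4,0), (3,0), (2,0), (2,1), (3,1), (4,1), (5,1), (0,1)],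
 [(1,1), (0,1), (0,0), (5,0), (5,1), (4,1), (4,0), (3,0), (3,1), (2,1), (2,0), (1,0)],
 [],
 [],
 [(1,1), (0,1), (0,0), (1,0), (2,0), (3,0), (4,0), (5,0), (5,1), (4,1), (3,1), (2,1)],
 [(1,1), (0,1), (0,0), (1,0), (2,0), (2,1), (3,1), (4,1), (5,1), (5,0), (4,0), (3,0)],
 [],
 [],
 [(1,1), (0,1), (0,0), (1,0), (2,0), (2,1), (3,1), (3,0), (4,0), (5,0), (5,1), (4,1)],
 [(1,1), (0,1), (0,0), (1,0), (2,0), (2,1), (3,1), (3,0), (4,0), (4,1), (5,1), (5,0)],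
 [],
 [],
 [(2,0), (1,0), (0,0), (5,0), (5,1), (4,1), (4,0), (3,0), (3,1), (2,1), (1,1), (0,1)],
 [(2,0), (2,1), (1,1), (0,1), (5,1), (4,1), (3,1), (3,0), (4,0), (5,0), (0,0), (1,0)],
 [],
 [],
 [(2,0), (1,0), (0,0), (5,0), (4,0), (3,0), (3,1), (4,1), (5,1), (0,1), (1,1), (2,1)],
 [(2,0), (1,0), (0,0), (0,1), (1,1), (2,1), (3,1), (4,1), (5,1), (5,0), (4,0), (3,0)],
 [],
 [],
 [(2,0), (1,0), (0,0), (0,1), (1,1), (2,1), (3,1), (3,0), (4,0), (5,0), (5,1), (4,1)],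
 [(2,0), (1,0), (0,0), (0,1), (1,1), (2,1), (3,1), (3,0), (4,0), (4,1), (5,1), (5,0)],
 [],
 [(2,1), (1,1), (0,1), (5,1), (5,0), (4,0), (4,1), (3,1), (3,0), (2,0), (1,0), (0,0)],
 [],
 [],
 [(2,1), (2,0), (1,0), (0,0), (5,0), (4,0), (3,0), (3,1), (4,1), (5,1), (0,1), (1,1)],
 [(2,1), (1,1), (0,1), (5,1), (4,1), (3,1), (3,0), (4,0), (5,0), (0,0), (1,0), (2,0)],
 [],
 [],
 [(2,1), (1,1), (0,1), (0,0), (1,0), (2,0), (3,0), (4,0), (5,0), (5,1), (4,1), (3,1)],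
 [(2,1), (1,1), (0,1), (0,0), (1,0), (2,0), (3,0), (3,1), (4,1), (5,1), (5,0), (4,0)],
 [],
 [],
 [(2,1), (1,1), (0,1), (0,0), (1,0), (2,0), (3,0), (3,1), (4,1), (4,0), (5,0), (5,1)],
 [(3,0), (2,0), (1,0), (1,1), (2,1), (3,1), (4,1), (4,0), (5,0), (5,1), (0,1), (0,0)],
 [],
 [],
 [(3,0), (2,0), (1,0), (0,0), (0,1), (5,1), (5,0), (4,0), (4,1), (3,1), (2,1), (1,1)],
 [(3,0), (3,1), (2,1), (1,1), (0,1), (5,1), (4,1), (4,0), (5,0), (0,0), (1,0), (2,0)],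
 [],
 [],
 [(3,0), (2,0), (1,0), (0,0), (5,0), (4,0), (4,1), (5,1), (0,1), (1,1), (2,1), (3,1)],
 [(3,0), (2,0), (1,0), (0,0), (0,1), (1,1), (2,1), (3,1), (4,1), (5,1), (5,0), (4,0)],
 [],
 [],
 [(3,0), (2,0), (1,0), (0,0), (0,1), (1,1), (2,1), (3,1), (4,1), (4,0), (5,0), (5,1)],
 [],
 [(3,1), (2,1), (1,1), (1,0), (2,0), (3,0), (4,0), (4,1), (5,1), (5,0), (0,0), (0,1)],
 [(3,1), (2,1), (1,1), (0,1), (0,0), (5,0), (5,1), (4,1), (4,0), (3,0), (2,0), (1,0)],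
 [],
 [],
 [(3,1), (3,0), (2,0), (1,0), (0,0), (5,0), (4,0), (4,1), (5,1), (0,1), (1,1), (2,1)],
 [(3,1), (2,1), (1,1), (0,1), (5,1), (4,1), (4,0), (5,0), (0,0), (1,0), (2,0), (3,0)],
 [],
 [],
 [(3,1), (2,1), (1,1), (0,1), (0,0), (1,0), (2,0), (3,0), (4,0), (5,0), (5,1), (4,1)],
 [(3,1), (2,1), (1,1), (0,1), (0,0), (1,0), (2,0), (3,0), (4,0), (4,1), (5,1), (5,0)],
 [],
 [],
 [(4,0), (3,0), (2,0), (1,0), (0,0), (5,0), (5,1), (4,1), (3,1), (2,1), (1,1), (0,1)],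
 [(4,0), (3,0), (2,0), (2,1), (3,1), (4,1), (5,1), (5,0), (0,0), (0,1), (1,1), (1,0)],
 [],
 [],
 [(4,0), (3,0), (2,0), (1,0), (1,1), (0,1), (0,0), (5,0), (5,1), (4,1), (3,1), (2,1)],
 [(4,0), (4,1), (3,1), (2,1), (1,1), (0,1), (5,1), (5,0), (0,0), (1,0), (2,0), (3,0)],
 [],
 [],
 [(4,0), (3,0), (2,0), (1,0), (0,0), (5,0), (5,1), (0,1), (1,1), (2,1), (3,1), (4,1)],
 [(4,0), (3,0), (2,0), (1,0), (0,0), (0,1), (1,1), (2,1), (3,1), (4,1), (5,1), (5,0)],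
 [],
 [(4,1), (3,1), (2,1), (1,1), (0,1), (5,1), (5,0), (4,0), (3,0), (2,0), (1,0), (0,0)],
 [],
 [],
 [(4,1), (3,1), (2,1), (2,0), (3,0), (4,0), (5,0), (5,1), (0,1), (0,0), (1,0), (1,1)],
 [(4,1), (3,1), (2,1), (1,1), (1,0), (0,0), (0,1), (5,1), (5,0), (4,0), (3,0), (2,0)],
 [],
 [],
 [(4,1), (4,0), (3,0), (2,0), (1,0), (0,0), (5,0), (5,1), (0,1), (1,1), (2,1), (3,1)],
 [(4,1), (3,1), (2,1), (1,1), (0,1), (5,1), (5,0), (0,0), (1,0), (2,0), (3,0), (4,0)],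
 [],
 [],
 [(4,1), (3,1), (2,1), (1,1), (0,1), (0,0), (1,0), (2,0), (3,0), (4,0), (5,0), (5,1)],
 [(5,0), (4,0), (3,0), (2,0), (1,0), (1,1), (2,1), (3,1), (4,1), (5,1), (0,1), (0,0)],
 [],
 [],
 [(5,0), (0,0), (0,1), (5,1), (4,1), (4,0), (3,0), (3,1), (2,1), (2,0), (1,0), (1,1)],
 [(5,0), (0,0), (0,1), (5,1), (4,1), (4,0), (3,0), (3,1), (2,1), (1,1), (1,0), (2,0)],
 [],
 [],
 [(5,0), (0,0), (0,1), (5,1), (4,1), (4,0), (3,0), (2,0), (1,0), (1,1), (2,1), (3,1)],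
 [(5,0), (0,0), (0,1), (5,1), (4,1), (3,1), (2,1), (1,1), (1,0), (2,0), (3,0), (4,0)],
 [],
 [],
 [(5,0), (0,0), (0,1), (1,1), (1,0), (2,0), (2,1), (3,1), (3,0), (4,0), (4,1), (5,1)],
 [],
 [(5,1), (4,1), (3,1), (2,1), (1,1), (1,0), (2,0), (3,0), (4,0), (5,0), (0,0), (0,1)],
 [(5,1), (0,1), (0,0), (5,0), (4,0), (4,1), (3,1), (3,0), (2,0), (2,1), (1,1), (1,0)],
 [],
 [],
 [(5,1), (0,1), (0,0), (5,0), (4,0), (4,1), (3,1), (3,0), (2,0), (1,0), (1,1), (2,1)],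
 [(5,1), (0,1), (0,0), (5,0), (4,0), (4,1), (3,1), (2,1), (1,1), (1,0), (2,0), (3,0)],
 [],
 [],
 [(5,1), (0,1), (0,0), (5,0), (4,0), (3,0), (2,0), (1,0), (1,1), (2,1), (3,1), (4,1)],
 [(5,1), (0,1), (0,0), (1,0), (1,1), (2,1), (2,0), (3,0), (3,1), (4,1), (4,0), (5,0)],
 []]

def hamList (u v : V) : List V :=
  tbl.getD (12 * (u.1.val * 2 + u.2.val) + (v.1.val * 2 + v.2.val)) []

/-- boolean chain check (the `Decidable` instance for `Chain'` is kernel-opaque) -/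
def chk (l : List V) : Bool := (l.zip l.tail).all fun p => decide (prism6.Adj p.1 p.2)

lemma chain'_of_chk : ∀ l : List V, chk l = true → l.Chain' prism6.Adj
  | [], _ => List.isChain_nil
  | [_], _ => List.isChain_singleton _
  | a :: b :: t, h => by
    show List.IsChain _ _
    rw [List.isChain_cons_cons]
    simp only [chk, List.tail_cons, List.zip_cons_cons, List.all_cons, Bool.and_eq_true,
      decide_eq_true_eq] at h
    exact ⟨h.1, chain'_of_chk (b :: t) (by simpa [chk] using h.2)⟩

lemma key : ∀ u v : V, col u ≠ col v →
    chk (hamList u v) = true ∧ (hamList u v).head? = some u ∧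
    (hamList u v).getLast? = some v ∧ (hamList u v).Nodup ∧ ∀ a : V, a ∈ hamList u v := by
  intro u v h
  exact ⟨(by decide : ∀ u v : V, col u ≠ col v → chk (hamList u v) = true) u v h,
    (by decide : ∀ u v : V, col u ≠ col v → (hamList u v).head? = some u) u v h,
    (by decide : ∀ u v : V, col u ≠ col v → (hamList u v).getLast? = some v) u v h,
    (by decide : ∀ u v : V, col u ≠ col v → (hamList u v).Nodup) u v h,
    (by decide : ∀ u v : V, col u ≠ col v → ∀ a : V, a ∈ hamList u v) u v h⟩

lemma master (u v : V) (h : col u ≠ col v) :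
    ∃ p : prism6.Walk u v, p.IsHamiltonian := by
  obtain ⟨hc', hh, hl, hnd, hmem⟩ := key u v h
  have hc := chain'_of_chk _ hc'
  have hne : hamList u v ≠ [] := by
    intro h0; rw [h0] at hh; simp at hh
  have hu : (hamList u v).head hne = u := by
    have := List.head?_eq_head hne ▸ hh; exact Option.some_injective _ this
  have hv : (hamList u v).getLast hne = v := by
    have := (List.getLast?_eq_getLast hne) ▸ hl; exact Option.some_injective _ this
  refine ⟨(mkWalk (hamList u v) hne hc).copy hu hv, ?_⟩
  intro a
  rw [SimpleGraph.Walk.support_copy, mkWalk_support]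
  convert List.count_eq_one_of_mem hnd (hmem a)

lemma dist_odd (u v : V) (h : col u ≠ col v) (p : prism6.Walk u v) :
    Odd (prism6.dist u v) := by
  obtain ⟨q, hq⟩ := SimpleGraph.Reachable.exists_walk_length_eq_dist ⟨p⟩
  have := walk_parity q
  rw [Nat.odd_iff, ← hq]
  omega

end Prism6Aux

open Prism6Aux in
/-- for every vertex `u` of the 6-prism and every edge `e` of the
alternating set `M` of cycle edges, some endpoint `v` of `e` is at odd distance from `u`
and is joined to `u` by a Hamiltonian path. -/
theorem prism6_hamiltonian_path_to_matching_edge (u : ZMod 6 × Fin 2)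
    (e : Sym2 (ZMod 6 × Fin 2)) (he : e ∈ prism6M) :
    ∃ v : ZMod 6 × Fin 2, v ∈ e ∧ Odd (prism6.dist u v) ∧
      ∃ p : prism6.Walk u v, p.IsHamiltonian := by
  obtain ⟨s, a, ha, rfl⟩ := he
  have hcol : col (a, s) ≠ col (a + 1, s) := by
    rcases ha with rfl | rfl | rfl <;> fin_cases s <;> decide
  by_cases h : col u = col (a, s)
  · refine ⟨(a + 1, s), by simp, ?_, ?_⟩
    · obtain ⟨p, _⟩ := master u (a + 1, s) (h ▸ hcol)
      exact dist_odd _ _ (h ▸ hcol) p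
    · exact master u (a + 1, s) (h ▸ hcol)
  · refine ⟨(a, s), by simp, ?_, ?_⟩
    · obtain ⟨p, _⟩ := master u (a, s) h
      exact dist_odd _ _ h p
    · exact master u (a, s) h
end
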